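/- With P1' := P1 ⊖_ε P2 defined as above and S1' := supp(P1'), S2 := range(P2), every pair of unit vectors v ∈ S1', w ∈ S2 satisfies |⟨v, w⟩| ≤ ε. -/

import Mathlib

open Matrix
open scoped ComplexOrder Classical

/-- The `ε`-subtraction `P₁ ⊖_ε P₂ := P₁ − Σ_{x : λ_x ≥ ε², λ_x ≠ 0} Q_x`, where
`P₁ P₂ P₁ = Σ_x λ_x Q_x` is a spectral decomposition with data `(lam, Q)`. -/
noncomputable def epsSub {d : ℕ} {ι : Type*} [Fintype ι] (P1 : Matrix (Fin d) (Fin d) ℂ)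
    (lam : ι → ℝ) (Q : ι → Matrix (Fin d) (Fin d) ℂ) (ε : ℝ) : Matrix (Fin d) (Fin d) ℂ :=
  P1 - ∑ x ∈ Finset.univ.filter (fun x => ε ^ 2 ≤ lam x ∧ lam x ≠ 0), Q x


private lemma aux_sum_mulVec {d : ℕ} {ι : Type*} (s : Finset ι)
    (M : ι → Matrix (Fin d) (Fin d) ℂ) (v : Fin d → ℂ) :
    (∑ x ∈ s, M x) *ᵥ v = ∑ x ∈ s, (M x *ᵥ v) := by
  ext i
  simp only [Matrix.mulVec, dotProduct, Matrix.sum_apply, Finset.sum_mul,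
    Finset.sum_apply]
  exact Finset.sum_comm

private lemma aux_dotProduct_sum {d : ℕ} {ι : Type*} (s : Finset ι)
    (v : Fin d → ℂ) (f : ι → Fin d → ℂ) :
    v ⬝ᵥ (∑ x ∈ s, f x) = ∑ x ∈ s, v ⬝ᵥ f x := by
  simp only [dotProduct, Finset.sum_apply, Finset.mul_sum]
  exact Finset.sum_comm

private lemma aux_inner_equiv_symm {d : ℕ} (x y : Fin d → ℂ) :
    inner ℂ ((WithLp.equiv 2 _).symm x : EuclideanSpace ℂ (Fin d)) ((WithLp.equiv 2 _).symm y)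
      = star x ⬝ᵥ y := by
  rw [dotProduct_comm]; rfl

/-- Part 2 of Lemma 1: the support of `P₁ ⊖_ε P₂` has overlap at most `ε` with the
range of `P₂`. -/
theorem epsSub_overlap {d : ℕ} {ι : Type*} [Fintype ι]
    (P1 P2 : Matrix (Fin d) (Fin d) ℂ)
    (hP1 : P1.IsHermitian) (hP1idem : P1 * P1 = P1)
    (hP2 : P2.IsHermitian) (hP2idem : P2 * P2 = P2)
    (lam : ι → ℝ) (Q : ι → Matrix (Fin d) (Fin d) ℂ)
    (hQherm : ∀ x, (Q x).IsHermitian) (hQidem : ∀ x, Q x * Q x = Q x)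
    (hQorth : ∀ x y, x ≠ y → Q x * Q y = 0) (hQsum : ∑ x, Q x = 1)
    (hlam_inj : Function.Injective lam) (hlam : ∀ x, 0 ≤ lam x ∧ lam x ≤ 1)
    (hspec : P1 * P2 * P1 = ∑ x, ((lam x : ℂ) • Q x))
    (ε : ℝ) (hε : 0 ≤ ε) (hε1 : ε ≤ 1)
    (v w : Fin d → ℂ)
    (hv : v ∈ LinearMap.range (Matrix.mulVecLin (epsSub P1 lam Q ε)))
    (hw : w ∈ LinearMap.range (Matrix.mulVecLin P2))
    (hv1 : star v ⬝ᵥ v = 1) (hw1 : star w ⬝ᵥ w = 1) :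
    ‖star v ⬝ᵥ w‖ ≤ ε := by
  obtain ⟨u, hu⟩ := hv
  obtain ⟨t, ht⟩ := hw
  simp only [Matrix.mulVecLin_apply] at hu ht
  set F := Finset.univ.filter (fun x => ε ^ 2 ≤ lam x ∧ lam x ≠ 0) with hF
  set R : Matrix (Fin d) (Fin d) ℂ := ∑ x ∈ F, Q x with hR
  have hPR : epsSub P1 lam Q ε = P1 - R := rfl
  rw [hPR] at hu
  -- P1 absorbs the eigenprojectors with nonzero eigenvalue
  have hP1Q : ∀ x, lam x ≠ 0 → P1 * Q x = Q x := by
    intro x hx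
    have h1 : P1 * (P1 * P2 * P1) = P1 * P2 * P1 := by
      rw [← mul_assoc, ← mul_assoc, hP1idem]
    rw [hspec] at h1
    have hsumQ : (∑ y, (lam y : ℂ) • Q y) * Q x = (lam x : ℂ) • Q x := by
      rw [Finset.sum_mul]
      rw [Finset.sum_eq_single x]
      · rw [smul_mul_assoc, hQidem]
      · intro y _ hy
        rw [smul_mul_assoc, hQorth y x hy, smul_zero]
      · simp
    have h2 : (lam x : ℂ) • (P1 * Q x) = (lam x : ℂ) • Q x := by
      calc (lam x : ℂ) • (P1 * Q x) = P1 * ((lam x : ℂ) • Q x) := by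
            rw [mul_smul_comm]
        _ = P1 * ((∑ y, (lam y : ℂ) • Q y) * Q x) := by rw [hsumQ]
        _ = (P1 * ∑ y, (lam y : ℂ) • Q y) * Q x := by rw [mul_assoc]
        _ = (∑ y, (lam y : ℂ) • Q y) * Q x := by rw [h1]
        _ = (lam x : ℂ) • Q x := hsumQ
    have hxc : (lam x : ℂ) ≠ 0 := by exact_mod_cast hx
    exact smul_right_injective _ hxc h2
  have hQP1 : ∀ x, lam x ≠ 0 → Q x * P1 = Q x := by
    intro x hx
    have := congrArg Matrix.conjTranspose (hP1Q x hx)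
    rwa [Matrix.conjTranspose_mul, hP1.eq, (hQherm x).eq] at this
  -- P1 v = v
  have hP1v : P1 *ᵥ v = v := by
    have hM : P1 * (P1 - R) = P1 - R := by
      rw [mul_sub, hP1idem, hR, Finset.mul_sum]
      congr 1
      exact Finset.sum_congr rfl fun x hx => hP1Q x (Finset.mem_filter.mp hx).2.2
    rw [← hu, Matrix.mulVec_mulVec, hM]
  -- Q x v = 0 for x in the removed set
  have hQv : ∀ x ∈ F, Q x *ᵥ v = 0 := by
    intro x hx
    rw [← hu, Matrix.mulVec_mulVec]
    have : Q x * (P1 - R) = 0 := by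
      rw [mul_sub, hQP1 x (Finset.mem_filter.mp hx).2.2, hR, Finset.mul_sum]
      rw [Finset.sum_eq_single x]
      · rw [hQidem, sub_self]
      · intro y _ hy
        exact hQorth x y (Ne.symm hy)
      · intro h; exact absurd hx h
    rw [this, Matrix.zero_mulVec]
  -- P2 w = w
  have hP2w : P2 *ᵥ w = w := by
    rw [← ht, Matrix.mulVec_mulVec, hP2idem]
  -- key: star v ⬝ᵥ P2 v ≤ ε²
  have hvstar : star v ᵥ* P1 = star v := by
    rw [← hP1.eq, ← Matrix.star_mulVec, hP1v]
  have key : star v ⬝ᵥ (P2 *ᵥ v) ≤ (ε ^ 2 : ℂ) := by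
    have e1 : star v ⬝ᵥ (P2 *ᵥ v) = star v ⬝ᵥ ((P1 * P2 * P1) *ᵥ v) := by
      conv_rhs => rw [mul_assoc, ← Matrix.mulVec_mulVec, ← Matrix.mulVec_mulVec, hP1v,
        Matrix.dotProduct_mulVec, hvstar]
    have e2 : star v ⬝ᵥ ((P1 * P2 * P1) *ᵥ v)
        = ∑ x, (lam x : ℂ) * (star v ⬝ᵥ (Q x *ᵥ v)) := by
      rw [hspec]
      rw [aux_sum_mulVec, aux_dotProduct_sum]
      apply Finset.sum_congr rfl
      intro x _
      rw [Matrix.smul_mulVec, dotProduct_smul, smul_eq_mul]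
    have hr_nonneg : ∀ x, (0:ℂ) ≤ star v ⬝ᵥ (Q x *ᵥ v) := by
      intro x
      have : star v ⬝ᵥ (Q x *ᵥ v) = star (Q x *ᵥ v) ⬝ᵥ (Q x *ᵥ v) := by
        rw [Matrix.star_mulVec, ← Matrix.dotProduct_mulVec, Matrix.mulVec_mulVec,
          (hQherm x).eq, hQidem]
      rw [this]
      exact dotProduct_star_self_nonneg _
    have hsum1 : ∑ x, star v ⬝ᵥ (Q x *ᵥ v) = 1 := by
      rw [← aux_dotProduct_sum, ← aux_sum_mulVec, hQsum, Matrix.one_mulVec, hv1]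
    calc star v ⬝ᵥ (P2 *ᵥ v) = ∑ x, (lam x : ℂ) * (star v ⬝ᵥ (Q x *ᵥ v)) := by
          rw [e1, e2]
      _ ≤ ∑ x, (ε ^ 2 : ℂ) * (star v ⬝ᵥ (Q x *ᵥ v)) := by
          apply Finset.sum_le_sum
          intro x _
          by_cases hx : x ∈ F
          · rw [hQv x hx]
            simp
          · have hlx : lam x ≤ ε ^ 2 := by
              rw [hF, Finset.mem_filter] at hx
              push_neg at hx
              by_cases h0 : lam x = 0
              · rw [h0]; positivity
              · have := hx (Finset.mem_univ x)
                by_contra hc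
                push_neg at hc
                exact h0 (this hc.le)
            apply mul_le_mul_of_nonneg_right _ (hr_nonneg x)
            exact_mod_cast hlx
      _ = (ε ^ 2 : ℂ) := by
          rw [← Finset.mul_sum, hsum1, mul_one]
  -- now Cauchy-Schwarz in EuclideanSpace
  set a : EuclideanSpace ℂ (Fin d) := (WithLp.equiv 2 _).symm (P2 *ᵥ v) with ha
  set b : EuclideanSpace ℂ (Fin d) := (WithLp.equiv 2 _).symm w with hb
  have hinner : inner ℂ a b = star v ⬝ᵥ w := by
    rw [ha, hb, aux_inner_equiv_symm, Matrix.star_mulVec, hP2.eq,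
      ← Matrix.dotProduct_mulVec, hP2w]
  have hnb : ‖b‖ = 1 := by
    have h2 : ‖b‖ ^ 2 = 1 := by
      rw [← @inner_self_eq_norm_sq ℂ]
      have : (inner ℂ b b : ℂ) = star w ⬝ᵥ w := aux_inner_equiv_symm w w
      rw [this, hw1]
      simp
    nlinarith [norm_nonneg b]
  have hna : ‖a‖ ≤ ε := by
    have h2 : ‖a‖ ^ 2 ≤ ε ^ 2 := by
      rw [← @inner_self_eq_norm_sq ℂ]
      have e3 : (inner ℂ a a : ℂ) = star (P2 *ᵥ v) ⬝ᵥ (P2 *ᵥ v) :=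
        aux_inner_equiv_symm _ _
      have e4 : star (P2 *ᵥ v) ⬝ᵥ (P2 *ᵥ v) = star v ⬝ᵥ (P2 *ᵥ v) := by
        rw [Matrix.star_mulVec, ← Matrix.dotProduct_mulVec, Matrix.mulVec_mulVec,
          hP2.eq, hP2idem]
      have h5 : (star v ⬝ᵥ (P2 *ᵥ v)).re ≤ ε ^ 2 := by
        have := (Complex.le_def.mp key).1
        simpa [← Complex.ofReal_pow] using this
      rw [e3, e4]
      simpa using h5
    exact le_of_pow_le_pow_left₀ two_ne_zero hε h2
  calc ‖star v ⬝ᵥ w‖ = ‖(inner ℂ a b : ℂ)‖ := by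
        rw [hinner]
    _ ≤ ‖a‖ * ‖b‖ := norm_inner_le_norm a b
    _ ≤ ε * 1 := by
        apply mul_le_mul hna (le_of_eq hnb) (norm_nonneg b) hε
    _ = ε := mul_one ε
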